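/- arXiv:1505.07611 — 5 statements merged into one kernel-verified Lean document; each statement's English description precedes it below -/
import Mathlib

section
/- Under the assumptions of the Petrov-Galerkin characterization, if the discrete problem (find u_H ∈ V_H with a(u_H,w_H)=F(w_H) for all w_H∈W_H) has a unique solution, then this solution equals I_H u, where u is the continuous solution, and satisfies ‖u_H‖_V ≤ ‖I_H‖_{L(V)} α⁻¹ ‖F‖_{V'}. -/
/-- If the discrete Petrov-Galerkin problem (trial space `V_H = range I_H`,
test space `W_H`) has a unique solution, then this solution equals `I_H u`, where `u` is the
continuous solution, and `‖u_H‖ ≤ ‖I_H‖ α⁻¹ ‖F‖`. -/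
theorem stmt2 {V : Type*} [NormedAddCommGroup V] [InnerProductSpace ℂ V] [CompleteSpace V]
    (a : V →L[ℂ] V →SL[starRingEnd ℂ] ℂ) (Ca α : ℝ) (hα : 0 < α)
    (hbound : ∀ v w : V, ‖a v w‖ ≤ Ca * ‖v‖ * ‖w‖)
    (hinfsup : ∀ v : V, α * ‖v‖ ≤ ⨆ w : {w : V // w ≠ 0}, ‖a v w‖ / ‖(w : V)‖)
    (hinfsup' : ∀ w : V, w ≠ 0 → ∃ v : V, a v w ≠ 0)
    (F : V →SL[starRingEnd ℂ] ℂ)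
    (IH : V →L[ℂ] V) (hproj : ∀ v : V, IH (IH v) = IH v)
    (u : V) (hu : ∀ v : V, a u v = F v)
    (huniq : ∃! uH : V, uH ∈ Set.range IH ∧
      ∀ wH : V, (∀ z : V, IH z = 0 → a z wH = 0) → a uH wH = F wH) :
    ∀ uH : V, uH ∈ Set.range IH →
      (∀ wH : V, (∀ z : V, IH z = 0 → a z wH = 0) → a uH wH = F wH) →
      uH = IH u ∧ ‖uH‖ ≤ ‖IH‖ * α⁻¹ * ‖F‖ := by
  intro uH huHmem huHsol
  have hIHu_sol : IH u ∈ Set.range IH ∧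
      ∀ wH : V, (∀ z : V, IH z = 0 → a z wH = 0) → a (IH u) wH = F wH := by
    refine ⟨⟨u, rfl⟩, fun wH hwH => ?_⟩
    have hz : IH (u - IH u) = 0 := by simp [map_sub, hproj]
    have h0 := hwH _ hz
    have hsplit : a (u - IH u) wH = a u wH - a (IH u) wH := by simp [map_sub]
    rw [hsplit] at h0
    rw [← sub_eq_zero.mp h0, hu]
  obtain ⟨w, hw, hwuniq⟩ := huniq
  have heq : uH = IH u := by
    rw [hwuniq uH ⟨huHmem, huHsol⟩, hwuniq (IH u) hIHu_sol]
  refine ⟨heq, ?_⟩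
  have hunorm : ‖u‖ ≤ α⁻¹ * ‖F‖ := by
    have hsup : (⨆ w : {w : V // w ≠ 0}, ‖a u w‖ / ‖(w : V)‖) ≤ ‖F‖ := by
      by_cases hne : Nonempty {w : V // w ≠ 0}
      · apply ciSup_le
        rintro ⟨w, hw0⟩
        rw [hu, div_le_iff₀ (norm_pos_iff.mpr hw0)]
        exact F.le_opNorm w
      · rw [not_nonempty_iff] at hne
        rw [Real.iSup_of_isEmpty]
        exact norm_nonneg F
    have h1 := le_trans (hinfsup u) hsup
    rw [← le_div_iff₀' hα] at h1
    simpa [div_eq_inv_mul] using h1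
  calc ‖uH‖ = ‖IH u‖ := by rw [heq]
    _ ≤ ‖IH‖ * ‖u‖ := IH.le_opNorm u
    _ ≤ ‖IH‖ * (α⁻¹ * ‖F‖) := by
        exact mul_le_mul_of_nonneg_left hunorm (norm_nonneg IH)
    _ = ‖IH‖ * α⁻¹ * ‖F‖ := by ring
end

section
/- Let I_H : V → V_H ⊂ V be a bounded linear projection with I_H ≠ 0 and I_H ≠ id. Then the Petrov-Galerkin solution u_H = I_H u satisfies the quasi-optimality estimate ‖u − u_H‖_V ≤ ‖I_H‖_{L(V)} · inf_{v_H ∈ V_H} ‖u − v_H‖_V. -/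
open scoped InnerProductSpace

/-- Quasi-optimality of the Petrov-Galerkin solution `u_H = I_H u`:
`‖u − I_H u‖ ≤ ‖I_H‖ · inf_{v_H ∈ V_H} ‖u − v_H‖`, for a bounded nontrivial projection
`I_H` onto `V_H = range I_H`. -/
theorem stmt3 {V : Type*} [NormedAddCommGroup V] [InnerProductSpace ℂ V] [CompleteSpace V]
    (IH : V →L[ℂ] V) (hproj : ∀ v : V, IH (IH v) = IH v)
    (hne0 : IH ≠ 0) (hneid : IH ≠ ContinuousLinearMap.id ℂ V) (u : V) :
    ‖u - IH u‖ ≤ ‖IH‖ * ⨅ vH : Set.range IH, ‖u - (vH : V)‖ := by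
  classical
  set C := ‖IH‖ with hC
  -- the range as a submodule
  set K : Submodule ℂ V := LinearMap.range (IH : V →ₗ[ℂ] V) with hK
  have hmemK : ∀ x : V, x ∈ K ↔ IH x = x := by
    intro x
    constructor
    · rintro ⟨y, rfl⟩; exact hproj y
    · intro h; exact ⟨x, h⟩
  -- K is closed, hence complete
  have hclosed : IsClosed (K : Set V) := by
    have : (K : Set V) = {x : V | IH x - x = 0} := by
      ext x
      simp [hmemK x, sub_eq_zero]
    rw [this]
    exact isClosed_eq (by continuity) continuous_const
  haveI : CompleteSpace K := hclosed.completeSpace_coe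
  set p : V := (Submodule.orthogonalProjectionOnto K u : V) with hp
  have hpK : p ∈ K := (Submodule.orthogonalProjectionOnto K u).2
  have hIHp : IH p = p := (hmemK p).1 hpK
  set w : V := u - p with hw
  have hworth : ∀ m ∈ K, ⟪w, m⟫_ℂ = 0 := fun m hm => Submodule.starProjection_inner_eq_zero u m hm
  have hIHwK : IH w ∈ K := ⟨w, rfl⟩
  -- C ≥ 1
  have hCone : 1 ≤ C := by
    obtain ⟨x, hx⟩ : ∃ x, IH x ≠ 0 := by
      by_contra h
      push_neg at h
      exact hne0 (ContinuousLinearMap.ext fun x => by simp [h x])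
    have h1 : ‖IH (IH x)‖ ≤ C * ‖IH x‖ := IH.le_opNorm _
    rw [hproj x] at h1
    have hpos : 0 < ‖IH x‖ := norm_pos_iff.mpr hx
    nlinarith
  set a : ℝ := ‖IH w‖ with ha
  set b : ℝ := ‖w‖ with hb
  have ha0 : 0 ≤ a := norm_nonneg _
  have hb0 : 0 ≤ b := norm_nonneg _
  -- family of inequalities
  have hfam : ∀ t : ℝ, (1 + t) ^ 2 * a ^ 2 ≤ C ^ 2 * (t ^ 2 * a ^ 2 + b ^ 2) := by
    intro t
    have hz : IH ((t : ℂ) • IH w + w) = ((1 + t : ℝ) : ℂ) • IH w := by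
      rw [map_add, map_smul, hproj w]
      push_cast
      rw [add_smul, one_smul]
      abel
    have h1 : ‖IH ((t : ℂ) • IH w + w)‖ ≤ C * ‖(t : ℂ) • IH w + w‖ := IH.le_opNorm _
    rw [hz] at h1
    have h2 : ‖((1 + t : ℝ) : ℂ) • IH w‖ = |1 + t| * a := by
      rw [norm_smul, Complex.norm_real, Real.norm_eq_abs]
    have h3 : ‖(t : ℂ) • IH w + w‖ ^ 2 = t ^ 2 * a ^ 2 + b ^ 2 := by
      have horth : ⟪(t : ℂ) • IH w, w⟫_ℂ = 0 := by
        rw [inner_smul_left]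
        have : ⟪IH w, w⟫_ℂ = 0 := by
          rw [← inner_conj_symm, hworth _ hIHwK, map_zero]
        rw [this, mul_zero]
      have h5 := norm_add_sq (𝕜 := ℂ) ((t : ℂ) • IH w) w
      rw [horth] at h5
      simp only [map_zero, mul_zero, add_zero] at h5
      rw [h5, norm_smul, Complex.norm_real, Real.norm_eq_abs, mul_pow, sq_abs]
    have h4 : (|1 + t| * a) ^ 2 ≤ (C * ‖(t : ℂ) • IH w + w‖) ^ 2 := by
      apply pow_le_pow_left₀ (by positivity) (by rw [h2] at h1; exact h1)
    rw [mul_pow, mul_pow, h3, sq_abs] at h4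
    linarith
  -- derive a² ≤ (C² - 1) b²
  have hkey : a ^ 2 + b ^ 2 ≤ C ^ 2 * b ^ 2 := by
    rcases eq_or_lt_of_le hCone with hC1 | hC1
    · -- C = 1 : a (2t+1) ≤ b² for all t forces a = 0
      rcases eq_or_lt_of_le ha0 with ha1 | ha1
      · rw [← ha1, ← hC1]; norm_num
      · exfalso
        have h := hfam (b ^ 2 / a ^ 2)
        rw [← hC1] at h
        have ha2 : 0 < a ^ 2 := by positivity
        have hdiv : a ^ 2 * (b ^ 2 / a ^ 2) = b ^ 2 := by
          field_simp
        nlinarith [h, hdiv, ha2, sq_nonneg b]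
    · -- C > 1 : take t = 1/(C²-1)
      have hD : 0 < C ^ 2 - 1 := by nlinarith
      have hC2 : (0:ℝ) < C ^ 2 := by positivity
      have h := hfam (1 / (C ^ 2 - 1))
      have h1 : (C ^ 2 - 1) ≠ 0 := ne_of_gt hD
      have hstep : (1 + 1 / (C ^ 2 - 1)) = C ^ 2 / (C ^ 2 - 1) := by
        field_simp
        ring
      rw [hstep, div_pow, div_mul_eq_mul_div, one_div, inv_pow, inv_mul_eq_div] at h
      rw [div_le_iff₀ (by positivity)] at h
      rw [div_add' _ _ _ (by positivity), mul_assoc,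
        div_mul_cancel₀ _ (pow_ne_zero 2 h1)] at h
      -- h : (C^2)^2 * a^2 ≤ C^2 * (a^2 + b^2*(C^2-1)^2)
      have h3 : C ^ 2 * a ^ 2 ≤ a ^ 2 + b ^ 2 * (C ^ 2 - 1) ^ 2 :=
        le_of_mul_le_mul_left (by nlinarith [h]) hC2
      have h4 : a ^ 2 * (C ^ 2 - 1) ≤ b ^ 2 * (C ^ 2 - 1) * (C ^ 2 - 1) := by nlinarith [h3]
      have h5 : a ^ 2 ≤ b ^ 2 * (C ^ 2 - 1) := le_of_mul_le_mul_right h4 hD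
      nlinarith [h5]
  -- ‖u - IH u‖² = a² + b²
  have hid : u - IH u = w - IH w := by
    rw [hw, map_sub, hIHp]
    abel
  have hnorm : ‖u - IH u‖ ^ 2 = b ^ 2 + a ^ 2 := by
    rw [hid]
    have horth : ⟪w, IH w⟫_ℂ = 0 := hworth _ hIHwK
    have h5 := norm_sub_sq (𝕜 := ℂ) w (IH w)
    rw [horth] at h5
    simp only [map_zero, mul_zero, sub_zero] at h5
    rw [h5]
  -- conclude ‖u - IH u‖ ≤ C * b
  have hfinal : ‖u - IH u‖ ≤ C * b := by
    have h1 : ‖u - IH u‖ ^ 2 ≤ (C * b) ^ 2 := by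
      rw [hnorm, mul_pow]; linarith
    nlinarith [norm_nonneg (u - IH u), mul_nonneg (le_trans zero_le_one hCone) hb0]
  -- the infimum equals b
  have hset : Set.range ⇑IH = (K : Set V) := by
    rw [hK]
    exact (LinearMap.coe_range _).symm
  have hinf : (⨅ vH : Set.range ⇑IH, ‖u - (vH : V)‖) = b := by
    rw [hb, hw, hp, ← Submodule.starProjection_apply, Submodule.starProjection_minimal]
    congr 1
  rw [hinf]
  exact hfinal
end

section
/- For a bounded linear projection P on a Hilbert space V with P ≠ 0 and P ≠ id, the operator norms of P and of 1−P coincide: ‖P‖_{L(V)} = ‖1−P‖_{L(V)}. -/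
lemma h6aux {x y : ℝ} (h : x ^ 2 ≤ y ^ 2) (hx : 0 ≤ x) (hy : 0 ≤ y) : x ≤ y := by
  nlinarith

open scoped InnerProductSpace in
lemma aux_le {V : Type*} [NormedAddCommGroup V] [InnerProductSpace ℂ V] [CompleteSpace V]
    (P : V →L[ℂ] V) (hproj : ∀ v : V, P (P v) = P v)
    (h1 : P ≠ ContinuousLinearMap.id ℂ V) :
    ‖P‖ ≤ ‖ContinuousLinearMap.id ℂ V - P‖ := by
  set Q := ContinuousLinearMap.id ℂ V - P with hQ
  have hQapp : ∀ v, Q v = v - P v := fun v => rfl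
  have hQidem : ∀ v, Q (Q v) = Q v := by
    intro v; simp [hQapp, map_sub, hproj v]
  have hQne : Q ≠ 0 := by
    intro h
    apply h1
    ext v
    have := congrFun (congrArg DFunLike.coe h) v
    exact (sub_eq_zero.mp (by simpa [hQapp] using this)).symm
  have hQ1 : 1 ≤ ‖Q‖ := by
    have hcomp : Q.comp Q = Q := by ext v; exact hQidem v
    have h2 : ‖Q‖ ≤ ‖Q‖ * ‖Q‖ := by
      conv_lhs => rw [← hcomp]
      exact Q.opNorm_comp_le Q
    have hpos : 0 < ‖Q‖ := norm_pos_iff.mpr hQne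
    nlinarith
  -- R = ker Q, the range of P
  set R : Submodule ℂ V := LinearMap.ker (Q : V →ₗ[ℂ] V) with hR
  haveI : CompleteSpace R := Q.isClosed_ker.completeSpace_coe
  set β := Real.sqrt (‖Q‖ ^ 2 - 1) with hβ
  have hβnn : 0 ≤ β := Real.sqrt_nonneg _
  have hβsq : β ^ 2 = ‖Q‖ ^ 2 - 1 := Real.sq_sqrt (by nlinarith)
  apply ContinuousLinearMap.opNorm_le_bound _ (norm_nonneg Q)
  intro v
  set m : V := (R.orthogonalProjectionOnto v : V) with hm
  have hmR : m ∈ R := (R.orthogonalProjectionOnto v).2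
  set u : V := v - m with hu
  have huO : u ∈ Rᗮ := Submodule.sub_starProjection_mem_orthogonal (K := R) v
  have hPm : P m = m := by
    have h : m - P m = 0 := hmR
    exact (sub_eq_zero.mp h).symm
  have hPuR : P u ∈ R := by
    show Q (P u) = 0
    simp [hQapp, hproj u]
  -- ‖v‖² = ‖m‖² + ‖u‖²
  have hv2 : ‖v‖ ^ 2 = ‖m‖ ^ 2 + ‖u‖ ^ 2 := by
    have hvmu : v = m + u := by simp [hu]
    have hinner : ⟪m, u⟫_ℂ = 0 := Submodule.inner_right_of_mem_orthogonal hmR huO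
    have hp := norm_add_sq_eq_norm_sq_add_norm_sq_of_inner_eq_zero m u hinner
    rw [hvmu]; nlinarith [hp]
  -- ‖Q u‖² = ‖u‖² + ‖P u‖²
  have hQu2 : ‖Q u‖ ^ 2 = ‖u‖ ^ 2 + ‖P u‖ ^ 2 := by
    have : Q u = u + (-(P u)) := by simp [hQapp]; abel
    have hinner : ⟪u, -(P u)⟫_ℂ = 0 := by
      rw [inner_neg_right]
      rw [Submodule.inner_left_of_mem_orthogonal hPuR huO]
      simp
    have hp := norm_add_sq_eq_norm_sq_add_norm_sq_of_inner_eq_zero u (-(P u)) hinner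
    rw [this]; rw [norm_neg] at hp; nlinarith [hp]
  have hPu : ‖P u‖ ^ 2 ≤ β ^ 2 * ‖u‖ ^ 2 := by
    have h3 : ‖Q u‖ ≤ ‖Q‖ * ‖u‖ := Q.le_opNorm u
    have h4 : ‖Q u‖ ^ 2 ≤ ‖Q‖ ^ 2 * ‖u‖ ^ 2 := by nlinarith [norm_nonneg (Q u), norm_nonneg u, norm_nonneg Q]
    rw [hβsq]; nlinarith
  have hPv : P v = m + P u := by
    have : v = m + u := by simp [hu]
    rw [this, map_add, hPm]
  have h5 : ‖P v‖ ≤ ‖m‖ + ‖P u‖ := hPv ▸ norm_add_le m (P u)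
  have h6 : ‖P u‖ ≤ β * ‖u‖ := by
    have h : ‖P u‖ ^ 2 ≤ (β * ‖u‖) ^ 2 := by rw [mul_pow]; exact hPu
    exact h6aux h (norm_nonneg _) (mul_nonneg hβnn (norm_nonneg u))
  have h7 : (‖m‖ + β * ‖u‖) ^ 2 ≤ ‖Q‖ ^ 2 * ‖v‖ ^ 2 := by
    rw [hv2]
    nlinarith [sq_nonneg (β * ‖m‖ - ‖u‖), norm_nonneg m, norm_nonneg u]
  have h8 : ‖m‖ + β * ‖u‖ ≤ ‖Q‖ * ‖v‖ := by
    refine h6aux ?_ (by positivity) (by positivity)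
    rw [mul_pow]; exact h7
  linarith [h6]

/-- For a bounded linear projection `P ≠ 0, id` on a Hilbert space,
`‖P‖ = ‖1 − P‖`. -/
theorem stmt4 {V : Type*} [NormedAddCommGroup V] [InnerProductSpace ℂ V] [CompleteSpace V]
    (P : V →L[ℂ] V) (hproj : ∀ v : V, P (P v) = P v)
    (h0 : P ≠ 0) (h1 : P ≠ ContinuousLinearMap.id ℂ V) :
    ‖P‖ = ‖ContinuousLinearMap.id ℂ V - P‖ := by
  set Q := ContinuousLinearMap.id ℂ V - P with hQ
  have hle : ‖P‖ ≤ ‖Q‖ := aux_le P hproj h1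
  have hQproj : ∀ v, Q (Q v) = Q v := by
    intro v
    show (Q v) - P (Q v) = Q v
    show (Q v) - P (v - P v) = Q v
    rw [map_sub, hproj v, sub_self, sub_zero]
  have hQne : Q ≠ ContinuousLinearMap.id ℂ V := by
    intro h
    apply h0
    ext v
    have h2 := congrFun (congrArg DFunLike.coe h) v
    have h3 : v - P v = v := h2
    have := sub_eq_self.mp h3
    simpa using this
  have hge : ‖Q‖ ≤ ‖ContinuousLinearMap.id ℂ V - Q‖ := aux_le Q hQproj hQne
  have hPQ : ContinuousLinearMap.id ℂ V - Q = P := by simp [hQ]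
  rw [hPQ] at hge
  exact le_antisymm hle hge
end

section
/- If a is a Hermitian sesquilinear form (a(v,w) = conj(a(w,v))), then the Petrov-Galerkin system matrix is Hermitian: for all u_H, v_H ∈ V_H, a(u_H, T v_H) = conj(a(v_H, T u_H)), where T = 1 + C is the trial-to-test operator. -/
/-- If `a` is Hermitian, then the Petrov-Galerkin system matrix is Hermitian:
`a(u_H, Tv_H) = conj (a(v_H, Tu_H))` for all `u_H, v_H ∈ V_H`, where `T = 1 + C`. -/
theorem stmt8 {V : Type*} [NormedAddCommGroup V] [InnerProductSpace ℂ V] [CompleteSpace V]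
    (a : V →L[ℂ] V →SL[starRingEnd ℂ] ℂ) (IH : V →L[ℂ] V)
    (hproj : ∀ v : V, IH (IH v) = IH v)
    (hherm : ∀ v w : V, a v w = starRingEnd ℂ (a w v))
    (C : V →L[ℂ] V)
    (hCker : ∀ v : V, IH (C v) = 0)
    (hC : ∀ v z : V, IH z = 0 → a z (C v) = - a z v) :
    ∀ uH ∈ Set.range IH, ∀ vH ∈ Set.range IH,
      a uH (vH + C vH) = starRingEnd ℂ (a vH (uH + C uH)) := by
  intro uH _ vH _
  have key : ∀ u v : V, a (C u) (v + C v) = 0 := by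
    intro u v
    have := hC v (C u) (hCker u)
    simp [map_add, this]
  have expand : ∀ u v : V, a u (v + C v) = a (u + C u) (v + C v) := by
    intro u v
    have : a (u + C u) (v + C v) = a u (v + C v) + a (C u) (v + C v) := by
      simp [map_add]; ring
    rw [this, key, add_zero]
  rw [expand uH vH, expand vH uH, hherm]
end

section
/- If the discrete inf-sup condition for the Petrov-Galerkin pair (V_H, W_H) holds (equivalently dim W_H = dim V_H < ∞ together with well-posedness), then the discrete inf-sup constant is bounded below by α/‖I_H‖_{L(V)}: inf over nonzero v_H∈V_H of sup over nonzero w_H∈W_H of |a(v_H,w_H)|/(‖v_H‖‖w_H‖) ≥ α/‖I_H‖_{L(V)}. -/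
open ContinuousLinearMap

local notation "⟪" x ", " y "⟫" => @inner ℂ _ _ x y

/-- Abstract lemma: a bounded-below operator with dense range between Hilbert spaces
has adjoint bounded below with the same constant. -/
lemma key_aux {E F : Type*} [NormedAddCommGroup E] [InnerProductSpace ℂ E] [CompleteSpace E]
    [NormedAddCommGroup F] [InnerProductSpace ℂ F] [CompleteSpace F]
    (T : E →L[ℂ] F) (c : ℝ) (hc : 0 < c) (h1 : ∀ x, c * ‖x‖ ≤ ‖T x‖)
    (h2 : ∀ y : F, (∀ x, ⟪T x, y⟫ = 0) → y = 0) (y : F) :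
    c * ‖y‖ ≤ ‖T.adjoint y‖ := by
  have hanti : AntilipschitzWith (⟨c, hc.le⟩ : NNReal)⁻¹ T := by
    apply ContinuousLinearMap.antilipschitz_of_bound
    intro x
    have h : (((⟨c, hc.le⟩ : NNReal)⁻¹ : NNReal) : ℝ) = c⁻¹ := rfl
    rw [h, ← div_eq_inv_mul, le_div_iff₀ hc, mul_comm]
    exact h1 x
  have hclosed : IsClosed (Set.range T) := hanti.isClosed_range T.uniformContinuous
  have hclosed' : IsClosed ((LinearMap.range (T : E →ₗ[ℂ] F) : Submodule ℂ F) : Set F) := by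
    rwa [LinearMap.coe_range]
  haveI : CompleteSpace (LinearMap.range (T : E →ₗ[ℂ] F) : Submodule ℂ F) := hclosed'.completeSpace_coe
  have hortho : (LinearMap.range (T : E →ₗ[ℂ] F) : Submodule ℂ F)ᗮ = ⊥ := by
    rw [Submodule.eq_bot_iff]
    intro z hz
    exact h2 z fun x => (Submodule.mem_orthogonal _ z).mp hz (T x) (LinearMap.mem_range_self _ x)
  have hsurj : LinearMap.range (T : E →ₗ[ℂ] F) = ⊤ := by
    rwa [Submodule.orthogonal_eq_bot_iff] at hortho
  have hinj : LinearMap.ker (T : E →ₗ[ℂ] F) = ⊥ := LinearMap.ker_eq_bot.mpr hanti.injective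
  set e := ContinuousLinearEquiv.ofBijective T hinj hsurj with he
  rcases eq_or_ne y 0 with rfl | hy
  · simp
  · have hx0 : T (e.symm y) = y :=
      ContinuousLinearEquiv.ofBijective_apply_symm_apply T hinj hsurj y
    have hx0n : ‖e.symm y‖ ≤ c⁻¹ * ‖y‖ := by
      have := h1 (e.symm y)
      rw [hx0] at this
      rw [← div_eq_inv_mul, le_div_iff₀ hc, mul_comm]
      exact this
    have h3 : (⟪e.symm y, T.adjoint y⟫ : ℂ) = ⟪y, y⟫ := by
      have := ContinuousLinearMap.adjoint_inner_right T (e.symm y) y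
      rw [hx0] at this
      exact this
    have hid : (‖y‖ : ℝ) * ‖y‖ ≤ ‖e.symm y‖ * ‖T.adjoint y‖ := by
      calc ‖y‖ * ‖y‖ = ‖(⟪y, y⟫ : ℂ)‖ := by
              rw [inner_self_eq_norm_sq_to_K]
              simp [sq]
        _ = ‖(⟪e.symm y, T.adjoint y⟫ : ℂ)‖ := by rw [h3]
        _ ≤ ‖e.symm y‖ * ‖T.adjoint y‖ := norm_inner_le_norm _ _
    have hyp : 0 < ‖y‖ := norm_pos_iff.mpr hy
    rw [← mul_le_mul_iff_left₀ hyp]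
    calc c * ‖y‖ * ‖y‖ = c * (‖y‖ * ‖y‖) := by ring
      _ ≤ c * (‖e.symm y‖ * ‖T.adjoint y‖) := mul_le_mul_of_nonneg_left hid hc.le
      _ ≤ c * ((c⁻¹ * ‖y‖) * ‖T.adjoint y‖) :=
          mul_le_mul_of_nonneg_left (mul_le_mul_of_nonneg_right hx0n (norm_nonneg _)) hc.le
      _ = (c * c⁻¹) * (‖y‖ * ‖T.adjoint y‖) := by ring
      _ = ‖T.adjoint y‖ * ‖y‖ := by rw [mul_inv_cancel₀ hc.ne']; ring

/-- The operator `A : V → V` with `⟪A w, v⟫ = a v w`. -/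
noncomputable def Aop {V : Type*} [NormedAddCommGroup V] [InnerProductSpace ℂ V]
    [CompleteSpace V] (a : V →L[ℂ] V →SL[starRingEnd ℂ] ℂ) : V →L[ℂ] V :=
  ((InnerProductSpace.toDual ℂ V).symm.toContinuousLinearEquiv.toContinuousLinearMap).comp a.flip

lemma Aop_inner {V : Type*} [NormedAddCommGroup V] [InnerProductSpace ℂ V]
    [CompleteSpace V] (a : V →L[ℂ] V →SL[starRingEnd ℂ] ℂ) (v w : V) :
    ⟪Aop a w, v⟫ = a v w := by
  simp [Aop, InnerProductSpace.toDual_symm_apply]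

/-- The subspace `W_H`. -/
def Nsub {V : Type*} [NormedAddCommGroup V] [InnerProductSpace ℂ V]
    (a : V →L[ℂ] V →SL[starRingEnd ℂ] ℂ) (IH : V →L[ℂ] V) : Submodule ℂ V where
  carrier := {w | ∀ z : V, IH z = 0 → a z w = 0}
  add_mem' := fun hw hw' z hz => by rw [map_add, hw z hz, hw' z hz, add_zero]
  zero_mem' := fun z _ => map_zero _
  smul_mem' := fun c w hw z hz => by
    rw [map_smulₛₗ, hw z hz, smul_zero]

set_option maxHeartbeats 1000000 in
/-- If the discrete Petrov-Galerkin problem for the pair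
`(V_H, W_H)` is uniquely solvable for every right-hand side, then the discrete inf-sup
constant is bounded below by `α/‖I_H‖`. -/
theorem stmt9 {V : Type*} [NormedAddCommGroup V] [InnerProductSpace ℂ V] [CompleteSpace V]
    (a : V →L[ℂ] V →SL[starRingEnd ℂ] ℂ) (Ca α : ℝ) (hα : 0 < α)
    (hbound : ∀ v w : V, ‖a v w‖ ≤ Ca * ‖v‖ * ‖w‖)
    (hinfsup : ∀ v : V, α * ‖v‖ ≤ ⨆ w : {w : V // w ≠ 0}, ‖a v w‖ / ‖(w : V)‖)
    (hinfsup' : ∀ w : V, w ≠ 0 → ∃ v : V, a v w ≠ 0)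
    (IH : V →L[ℂ] V) (hproj : ∀ v : V, IH (IH v) = IH v)
    (hwell : ∀ F : V →SL[starRingEnd ℂ] ℂ, ∃! uH : V, uH ∈ Set.range IH ∧
      ∀ wH : V, (∀ z : V, IH z = 0 → a z wH = 0) → a uH wH = F wH) :
    ∀ vH ∈ Set.range IH, α / ‖IH‖ * ‖vH‖ ≤
      ⨆ w : {w : V // (∀ z : V, IH z = 0 → a z w = 0) ∧ w ≠ 0}, ‖a vH w‖ / ‖(w : V)‖ := by
  intro vH hvH
  rcases eq_or_ne vH 0 with rfl | hvHne
  · simp only [norm_zero, mul_zero]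
    exact Real.iSup_nonneg fun w => div_nonneg (norm_nonneg _) (norm_nonneg _)
  -- basic positivity facts
  have hvHpos : 0 < ‖vH‖ := norm_pos_iff.mpr hvHne
  have hIHpos : 0 < ‖IH‖ := by
    rcases eq_or_lt_of_le (norm_nonneg IH) with h | h
    · exfalso
      apply hvHne
      rcases hvH with ⟨u, rfl⟩
      have : IH = 0 := by
        rwa [eq_comm, norm_eq_zero] at h
      rw [this]; rfl
    · exact h
  haveI : Nonempty {w : V // w ≠ 0} := ⟨⟨vH, hvHne⟩⟩
  have hCa : 0 ≤ Ca := by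
    have h1 := hbound vH vH
    nlinarith [norm_nonneg (a vH vH), mul_pos hvHpos hvHpos]
  -- Step A : the adjoint continuous inf-sup condition `α ‖w‖ ≤ ‖A w‖`.
  have hadj1 : ∀ v : V, α * ‖v‖ ≤ ‖(Aop a).adjoint v‖ := by
    intro v
    refine (hinfsup v).trans (ciSup_le fun w => ?_)
    rw [div_le_iff₀ (norm_pos_iff.mpr w.2)]
    have h : (a v (w : V) : ℂ) = ⟪(w : V), (Aop a).adjoint v⟫ := by
      rw [ContinuousLinearMap.adjoint_inner_right, Aop_inner]
    rw [h]
    exact (norm_inner_le_norm _ _).trans_eq (mul_comm _ _)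
  have hadj2 : ∀ y : V, (∀ x : V, ⟪(Aop a).adjoint x, y⟫ = 0) → y = 0 := by
    intro y hy
    by_contra hne
    obtain ⟨v, hv⟩ := hinfsup' y hne
    apply hv
    have h0 : (⟪y, (Aop a).adjoint v⟫ : ℂ) = 0 := inner_eq_zero_symm.mp (hy v)
    rw [ContinuousLinearMap.adjoint_inner_right, Aop_inner] at h0
    exact h0
  have hstepA : ∀ w : V, α * ‖w‖ ≤ ‖Aop a w‖ := by
    intro w
    have := key_aux ((Aop a).adjoint) α hα hadj1 hadj2 w
    rwa [ContinuousLinearMap.adjoint_adjoint] at this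
  -- the subspaces
  set M : Submodule ℂ V := LinearMap.ker ((ContinuousLinearMap.id ℂ V - IH : V →L[ℂ] V) : V →ₗ[ℂ] V) with hM
  have hmemM : ∀ x : V, x ∈ M ↔ IH x = x := by
    intro x
    rw [hM, LinearMap.mem_ker]
    constructor
    · intro h
      have h' : x - IH x = 0 := h
      linear_combination (norm := module) -h'
    · intro h
      show x - IH x = 0
      rw [h, sub_self]
  have hMclosed : IsClosed (M : Set V) := ContinuousLinearMap.isClosed_ker _
  haveI : CompleteSpace M := hMclosed.completeSpace_coe
  set N : Submodule ℂ V := Nsub a IH with hN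
  have hmemN : ∀ x : V, x ∈ N ↔ ∀ z : V, IH z = 0 → a z x = 0 := fun x => Iff.rfl
  have hNclosed : IsClosed (N : Set V) := by
    have h : (N : Set V) = ⋂ z : {z : V // IH z = 0}, {w : V | a (z : V) w = 0} := by
      ext w
      simp only [Set.mem_iInter, Set.mem_setOf_eq, Subtype.forall]
      exact hmemN w
    rw [h]
    exact isClosed_iInter fun z => isClosed_eq (a (z : V)).continuous continuous_const
  haveI : CompleteSpace N := hNclosed.completeSpace_coe
  have hvHM : vH ∈ M := by
    rcases hvH with ⟨u, rfl⟩
    exact (hmemM _).mpr (hproj u)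
  -- the operator T : N → M
  set T : N →L[ℂ] M := M.orthogonalProjection.comp ((Aop a).comp N.subtypeL) with hT
  have hTcoe : ∀ x : N, ((T x : V)) = (M.orthogonalProjection (Aop a (x : V)) : V) := fun x => rfl
  -- key inner product identity : ⟪T x, y⟫_M = a ↑y ↑x for y ∈ M
  have hTinner : ∀ (x : N) (y : M), (⟪T x, y⟫ : ℂ) = a (y : V) (x : V) := by
    intro x y
    have h1 : (⟪T x, y⟫ : ℂ) = ⟪(T x : V), (y : V)⟫ := Submodule.coe_inner M (T x) y
    rw [h1, hTcoe]
    have h2 : (⟪Aop a (x : V) - (M.orthogonalProjection (Aop a (x : V)) : V), (y : V)⟫ : ℂ) = 0 :=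
      Submodule.starProjection_inner_eq_zero _ _ y.2
    have h3 : (⟪(M.orthogonalProjection (Aop a (x : V)) : V), (y : V)⟫ : ℂ)
        = ⟪Aop a (x : V), (y : V)⟫ := by
      rw [inner_sub_left, sub_eq_zero] at h2
      exact h2.symm
    rw [h3, Aop_inner]
  -- hypothesis h1 for T
  have h1T : ∀ x : N, α / ‖IH‖ * ‖x‖ ≤ ‖T x‖ := by
    intro x
    set w : V := (x : V) with hw
    set v0 : V := Aop a w with hv0
    set p : V := (M.orthogonalProjection v0 : V) with hp
    have hTxnorm : ‖T x‖ = ‖p‖ := rfl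
    have hsplit : (a v0) w = (a (IH v0)) w := by
      have hker : IH (v0 - IH v0) = 0 := by
        rw [map_sub, hproj, sub_self]
      have h0 := x.2 (v0 - IH v0) hker
      have h' : (a (v0 - IH v0)) w = (a v0) w - (a (IH v0)) w := by
        rw [map_sub]; rfl
      rw [h'] at h0
      exact (sub_eq_zero.mp h0)
    have hv0sq : ‖v0‖ * ‖v0‖ ≤ ‖p‖ * (‖IH‖ * ‖v0‖) := by
      have e1 : (‖v0‖ : ℝ) * ‖v0‖ = RCLike.re (⟪v0, v0⟫ : ℂ) :=
        (inner_self_eq_norm_mul_norm v0).symm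
      have e2 : (⟪v0, v0⟫ : ℂ) = a v0 w := Aop_inner a v0 w
      have e3 : (a (IH v0)) w = ⟪v0, IH v0⟫ := (Aop_inner a (IH v0) w).symm
      have e4 : (⟪v0, IH v0⟫ : ℂ) = ⟪p, IH v0⟫ := by
        have h2 : (⟪v0 - p, IH v0⟫ : ℂ) = 0 :=
          Submodule.starProjection_inner_eq_zero v0 (IH v0) ((hmemM _).mpr (hproj v0))
        rw [inner_sub_left, sub_eq_zero] at h2
        exact h2
      have e5 : RCLike.re (⟪p, IH v0⟫ : ℂ) ≤ ‖p‖ * (‖IH‖ * ‖v0‖) := by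
        calc RCLike.re (⟪p, IH v0⟫ : ℂ) ≤ ‖(⟪p, IH v0⟫ : ℂ)‖ := RCLike.re_le_norm _
          _ ≤ ‖p‖ * ‖IH v0‖ := norm_inner_le_norm _ _
          _ ≤ ‖p‖ * (‖IH‖ * ‖v0‖) := by
              exact mul_le_mul_of_nonneg_left (IH.le_opNorm v0) (norm_nonneg _)
      rw [e1, e2, hsplit, e3, e4]
      exact e5
    rw [hTxnorm, div_mul_eq_mul_div, div_le_iff₀ hIHpos]
    have hxw : ‖x‖ = ‖w‖ := rfl
    rw [hxw]
    have hA : α * ‖w‖ ≤ ‖v0‖ := hstepA w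
    have hnn : (0 : ℝ) ≤ ‖p‖ * ‖IH‖ := mul_nonneg (norm_nonneg _) (norm_nonneg _)
    rcases eq_or_lt_of_le (norm_nonneg v0) with h0 | h0
    · rw [← h0] at hA
      linarith
    · have hle : ‖v0‖ ≤ ‖p‖ * ‖IH‖ := by nlinarith
      linarith
  -- hypothesis h2 for T : uses the uniqueness of the discrete solution
  have h2T : ∀ y : M, (∀ x : N, (⟪T x, y⟫ : ℂ) = 0) → y = 0 := by
    intro y hy
    have hzero : ∀ wH : V, (∀ z : V, IH z = 0 → a z wH = 0) → a (y : V) wH = 0 := by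
      intro wH hwH
      have h0 := hy ⟨wH, hwH⟩
      rw [hTinner] at h0
      exact h0
    obtain ⟨uH, _, huniq⟩ := hwell 0
    have hy1 : (y : V) = uH :=
      huniq (y : V) ⟨⟨(y : V), (hmemM _).mp y.2⟩, fun wH hwH => by
        rw [hzero wH hwH]; rfl⟩
    have hy2 : (0 : V) = uH :=
      huniq 0 ⟨⟨0, map_zero _⟩, fun wH hwH => by simp⟩
    exact Submodule.coe_eq_zero.mp (hy1.trans hy2.symm)
  -- apply the abstract lemma to T
  have hTadj := key_aux T (α / ‖IH‖) (div_pos hα hIHpos) h1T h2T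
  set yM : M := ⟨vH, hvHM⟩ with hyM
  have hkey := hTadj yM
  have hyMnorm : ‖yM‖ = ‖vH‖ := rfl
  set z : N := T.adjoint yM with hz
  have hzne : z ≠ 0 := by
    intro h0
    rw [h0, norm_zero, hyMnorm] at hkey
    nlinarith [div_pos hα hIHpos]
  have hzpos : 0 < ‖z‖ := norm_pos_iff.mpr hzne
  have hw0ne : (z : V) ≠ 0 := fun h => hzne (Subtype.ext h)
  have hval : (a vH (z : V) : ℂ) = ⟪z, z⟫ := by
    have h1 := hTinner z yM
    have h2 := ContinuousLinearMap.adjoint_inner_right T z yM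
    rw [← hz] at h2
    rw [← h2] at h1
    exact h1.symm
  have hnormval : ‖(a vH (z : V) : ℂ)‖ = ‖z‖ * ‖z‖ := by
    rw [hval, inner_self_eq_norm_sq_to_K]
    simp [sq]
  refine le_ciSup_of_le ?_ ⟨(z : V), ⟨(hmemN _).mp z.2, hw0ne⟩⟩ ?_
  · refine ⟨Ca * ‖vH‖, ?_⟩
    rintro r ⟨w, rfl⟩
    have hwpos : 0 < ‖(w : V)‖ := norm_pos_iff.mpr w.2.2
    rw [div_le_iff₀ hwpos]
    exact hbound vH (w : V)
  · show α / ‖IH‖ * ‖vH‖ ≤ ‖(a vH (z : V) : ℂ)‖ / ‖(z : V)‖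
    have hcoenorm : ‖(z : V)‖ = ‖z‖ := rfl
    rw [hcoenorm, hnormval, mul_div_assoc, div_self hzpos.ne', mul_one]
    rw [← hyMnorm]
    exact hkey
end
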